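/- arXiv:2211.16983 — 5 statements merged into one kernel-verified Lean document; each statement's English description precedes it below -/
import Mathlib

section
/- For a nontrivial finite group G, the minimal number of elements generating G as a normal subgroup (i.e., the least d such that there exist g_1,...,g_d whose normal closure is G) equals max(d(G^ab), 1), where d(G^ab) is the minimal number of generators of the abelianization of G. -/
open Subgroup Pointwise
open scoped commutatorElement

section Aux

variable {G : Type*} [Group G]

lemma ker_abel_of : (Abelianization.of : G →* Abelianization G).ker = commutator G := by
  ext x
  exact QuotientGroup.eq_one_iff x

lemma abel_of_surjective : Function.Surjective (Abelianization.of : G →* Abelianization G) :=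
  fun y => QuotientGroup.induction_on y fun g => ⟨g, rfl⟩

lemma eq_top_of_ker_le_of_map_top {H : Type*} [Group H] (f : G →* H) {K : Subgroup G}
    (hker : f.ker ≤ K) (h : Subgroup.map f K = ⊤) : K = ⊤ := by
  have h1 : Subgroup.comap f (Subgroup.map f K) = K ⊔ f.ker := Subgroup.comap_map_eq f K
  rw [h, Subgroup.comap_top, sup_eq_left.mpr hker] at h1
  exact h1.symm

lemma closure_abel_image_eq_top {s : Set G} (hs : Subgroup.normalClosure s = ⊤) :
    Subgroup.closure (Abelianization.of '' s) = ⊤ := by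
  set H := Subgroup.closure (Abelianization.of '' s)
  have hH : H.Normal := Subgroup.normal_of_comm H
  have hcomap : (Subgroup.comap (Abelianization.of : G →* _) H).Normal := hH.comap _
  have hsub : s ⊆ Subgroup.comap (Abelianization.of : G →* _) H := fun x hx =>
    Subgroup.subset_closure ⟨x, hx, rfl⟩
  have : Subgroup.normalClosure s ≤ Subgroup.comap (Abelianization.of : G →* _) H :=
    Subgroup.normalClosure_le_normal hsub
  rw [hs, top_le_iff] at this
  have h2 := Subgroup.map_comap_le (Abelianization.of : G →* _) H
  rw [this, ← MonoidHom.range_eq_map,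
    MonoidHom.range_eq_top.mpr abel_of_surjective, top_le_iff] at h2
  exact h2

lemma map_commutator_surj {H : Type*} [Group H] (f : G →* H) (hf : Function.Surjective f) :
    Subgroup.map f (commutator G) = commutator H := by
  rw [commutator_def, commutator_def, Subgroup.map_commutator, ← MonoidHom.range_eq_map,
    MonoidHom.range_eq_top.mpr hf]

lemma lift_both {N : Subgroup G} [hN : N.Normal] (q : G ⧸ N) (a : Abelianization G)
    (h : Abelianization.of q = Abelianization.map (QuotientGroup.mk' N) a) :
    ∃ g : G, QuotientGroup.mk' N g = q ∧ Abelianization.of g = a := by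
  obtain ⟨g₀, hg₀⟩ := QuotientGroup.mk'_surjective N q
  obtain ⟨c, hc⟩ := abel_of_surjective (a * (Abelianization.of g₀)⁻¹)
  have hc1 : Abelianization.of ((QuotientGroup.mk' N) c) = 1 := by
    rw [← Abelianization.map_of, hc, map_mul, map_inv, Abelianization.map_of, hg₀, ← h]
    group
  have hc2 : (QuotientGroup.mk' N) c ∈ commutator (G ⧸ N) := by
    rw [← ker_abel_of]; exact hc1
  rw [← map_commutator_surj (QuotientGroup.mk' N) (QuotientGroup.mk'_surjective N)] at hc2
  obtain ⟨c', hc', hcc⟩ := hc2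
  refine ⟨c * c'⁻¹ * g₀, ?_, ?_⟩
  · rw [map_mul, map_mul, map_inv, hcc, hg₀]
    group
  · have h1 : Abelianization.of c' = 1 := by
      rw [← MonoidHom.mem_ker, ker_abel_of]; exact hc'
    rw [map_mul, map_mul, map_inv, h1, inv_one, mul_one, hc]
    group

lemma exists_minimal_normal [Finite G] (h : ∃ K : Subgroup G, K.Normal ∧ K ≠ ⊥ ∧ K ≠ ⊤) :
    ∃ N : Subgroup G, N.Normal ∧ N ≠ ⊥ ∧ N ≠ ⊤ ∧
      ∀ K : Subgroup G, K.Normal → K ≤ N → K = ⊥ ∨ K = N := by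
  set S : Set (Subgroup G) := {K | K.Normal ∧ K ≠ ⊥ ∧ K ≠ ⊤} with hS
  obtain ⟨N, hNS, hmin0⟩ := Set.Finite.exists_minimalFor id S S.toFinite h
  have hmin : ∀ K ∈ S, K ≤ N → N = K := fun K hK hKN => le_antisymm (hmin0 hK hKN) hKN
  refine ⟨N, hNS.1, hNS.2.1, hNS.2.2, fun K hK hKN => ?_⟩
  by_cases hKbot : K = ⊥
  · exact Or.inl hKbot
  · right
    have hKtop : K ≠ ⊤ := fun ht => hNS.2.2 (top_le_iff.mp (ht ▸ hKN))
    exact (hmin K ⟨hK, hKbot, hKtop⟩ hKN).symm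

end Aux

universe u

lemma key_aux : ∀ (n : ℕ) (G : Type u) [Group G] [Finite G], Nat.card G = n →
    ∀ (d : ℕ), 1 ≤ d → ∀ (a : Fin d → Abelianization G),
    Subgroup.closure (Set.range a) = ⊤ →
    ∃ g : Fin d → G, (∀ i, Abelianization.of (g i) = a i) ∧
      Subgroup.normalClosure (Set.range g) = ⊤ := by
  intro n
  induction n using Nat.strong_induction_on with
  | _ n IH =>
  intro G _ _ hn d hd a ha
  by_cases hab : commutator G = ⊥
  · -- abelian case
    have hinj : Function.Injective (Abelianization.of : G →* _) := by
      rw [← MonoidHom.ker_eq_bot_iff, ker_abel_of]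
      exact hab
    choose g hg using fun i => abel_of_surjective (a i)
    refine ⟨g, hg, ?_⟩
    have hrange : Abelianization.of '' Set.range g = Set.range a := by
      rw [← Set.range_comp]
      exact congrArg _ (funext hg)
    have hcl : Subgroup.map (Abelianization.of : G →* _) (Subgroup.closure (Set.range g)) = ⊤ := by
      rw [MonoidHom.map_closure, hrange, ha]
    have hc : Subgroup.closure (Set.range g) = ⊤ := by
      apply Subgroup.map_injective hinj
      rw [hcl, ← MonoidHom.range_eq_map, MonoidHom.range_eq_top.mpr abel_of_surjective]
    exact top_unique (hc ▸ Subgroup.closure_le_normalClosure)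
  by_cases hsimple : IsSimpleGroup G
  · -- simple nonabelian case
    have hcomm_top : commutator G = ⊤ := by
      rcases (show Subgroup.Normal (commutator G) from inferInstance).eq_bot_or_eq_top with h | h
      · exact absurd h hab
      · exact h
    have hone : ∀ z : G, Abelianization.of z = 1 := fun z => by
      have : z ∈ (Abelianization.of : G →* _).ker := by
        rw [ker_abel_of, hcomm_top]; trivial
      exact this
    haveI : Subsingleton (Abelianization G) := by
      constructor
      intro x y
      obtain ⟨x', rfl⟩ := abel_of_surjective x
      obtain ⟨y', rfl⟩ := abel_of_surjective y
      rw [hone x', hone y']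
    haveI := hsimple
    haveI : Nontrivial G := inferInstance
    obtain ⟨x, hx⟩ := exists_ne (1 : G)
    set i0 : Fin d := ⟨0, hd⟩ with hi0
    refine ⟨fun i => if i = i0 then x else 1, fun i => Subsingleton.elim _ _, ?_⟩
    have hxmem : x ∈ Subgroup.normalClosure (Set.range (fun i => if i = i0 then x else 1)) :=
      Subgroup.subset_normalClosure ⟨i0, if_pos rfl⟩
    rcases Subgroup.Normal.eq_bot_or_eq_top
        (H := Subgroup.normalClosure (Set.range (fun i => if i = i0 then x else 1)))
        Subgroup.normalClosure_normal with h | h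
    · rw [h, Subgroup.mem_bot] at hxmem
      exact absurd hxmem hx
    · exact h
  · -- non-simple case
    have hnontriv : Nontrivial G := by
      by_contra h
      rw [not_nontrivial_iff_subsingleton] at h
      exact hab (Subsingleton.elim _ _)
    have hex : ∃ K : Subgroup G, K.Normal ∧ K ≠ ⊥ ∧ K ≠ ⊤ := by
      by_contra h
      push_neg at h
      exact hsimple
        { eq_bot_or_eq_top_of_normal := fun H hH => by
            by_cases hb : H = ⊥
            · exact Or.inl hb
            · exact Or.inr (h H hH hb) }
    obtain ⟨N, hNnorm, hNbot, hNtop, hNmin⟩ := exists_minimal_normal hex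
    haveI := hNnorm
    set π := QuotientGroup.mk' N with hπ
    have hπsurj : Function.Surjective π := QuotientGroup.mk'_surjective N
    have hcardlt : Nat.card (G ⧸ N) < n := by
      have h1 := Subgroup.card_eq_card_quotient_mul_card_subgroup N
      have h2 : 1 < Nat.card N := (Subgroup.one_lt_card_iff_ne_bot N).mpr hNbot
      have h3 : 0 < Nat.card (G ⧸ N) := Nat.card_pos
      rw [← hn, h1]
      exact (Nat.lt_mul_iff_one_lt_right h3).mpr h2
    set ψ := Abelianization.map π with hψ
    have hψsurj : Function.Surjective ψ := by
      intro y
      obtain ⟨y', rfl⟩ := abel_of_surjective y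
      obtain ⟨x, rfl⟩ := hπsurj y'
      exact ⟨Abelianization.of x, Abelianization.map_of π x⟩
    have ha' : Subgroup.closure (Set.range (fun i => ψ (a i))) = ⊤ := by
      have hr : Set.range (fun i => ψ (a i)) = ψ '' Set.range a := (Set.range_comp ψ a)
      rw [hr, ← MonoidHom.map_closure, ha, ← MonoidHom.range_eq_map,
        MonoidHom.range_eq_top.mpr hψsurj]
    obtain ⟨q, hq1, hq2⟩ := IH (Nat.card (G ⧸ N)) hcardlt (G ⧸ N) rfl d hd _ ha'
    have hlift : ∀ i, ∃ g : G, π g = q i ∧ Abelianization.of g = a i := fun i =>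
      lift_both (q i) (a i) (hq1 i)
    choose g hgπ hga using hlift
    have hrangeπ : ∀ g' : Fin d → G, (∀ i, π (g' i) = q i) →
        Subgroup.map π (Subgroup.normalClosure (Set.range g')) = ⊤ := by
      intro g' hg'
      rw [Subgroup.map_normalClosure _ _ hπsurj, ← Set.range_comp,
        show (⇑π ∘ g') = q from funext hg']
      exact hq2
    haveI : (⁅N, N⁆ : Subgroup G).Normal := Subgroup.commutator_normal N N
    rcases hNmin ⁅N, N⁆ inferInstance (Subgroup.commutator_le_left N N) with hNN | hNN
    · -- N abelian
      refine ⟨g, hga, ?_⟩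
      set H := Subgroup.normalClosure (Set.range g) with hH
      haveI : H.Normal := Subgroup.normalClosure_normal
      have hmapH : Subgroup.map π H = ⊤ := hrangeπ g hgπ
      have hsup : H ⊔ N = ⊤ := by
        have h1 := Subgroup.comap_map_eq π H
        rw [hmapH, Subgroup.comap_top, QuotientGroup.ker_mk'] at h1
        exact h1.symm
      have hcommH : commutator G ≤ H := by
        rw [_root_.commutator_def, Subgroup.commutator_le]
        intro x _ y _
        have hx : x ∈ (H : Set G) * (N : Set G) := by
          rw [← Subgroup.mul_normal H N, hsup]; simp
        have hy : y ∈ (H : Set G) * (N : Set G) := by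
          rw [← Subgroup.mul_normal H N, hsup]; simp
        obtain ⟨h1, hh1, n1, hn1, rfl⟩ := hx
        obtain ⟨h2, hh2, n2, hn2, rfl⟩ := hy
        have e1' : (QuotientGroup.mk' H) h1 = 1 := (QuotientGroup.eq_one_iff h1).mpr hh1
        have e2' : (QuotientGroup.mk' H) h2 = 1 := (QuotientGroup.eq_one_iff h2).mpr hh2
        have e1 : (QuotientGroup.mk' H) (h1 * n1) = (QuotientGroup.mk' H) n1 := by
          rw [map_mul, e1', one_mul]
        have e2 : (QuotientGroup.mk' H) (h2 * n2) = (QuotientGroup.mk' H) n2 := by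
          rw [map_mul, e2', one_mul]
        have e3 : (QuotientGroup.mk' H) ⁅h1 * n1, h2 * n2⁆ = 1 := by
          rw [map_commutatorElement, e1, e2, ← map_commutatorElement]
          have hmem : ⁅n1, n2⁆ ∈ (⁅N, N⁆ : Subgroup G) :=
            Subgroup.commutator_mem_commutator hn1 hn2
          rw [hNN, Subgroup.mem_bot] at hmem
          rw [hmem, map_one]
        exact (QuotientGroup.eq_one_iff _).mp e3
      have hclosure : Subgroup.closure (Set.range g) ⊔ commutator G = ⊤ := by
        have h1 : Subgroup.closure (Abelianization.of '' Set.range g) = ⊤ := by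
          rw [← Set.range_comp, show (⇑Abelianization.of ∘ g) = a from funext hga]
          exact ha
        rw [← MonoidHom.map_closure] at h1
        have h2 := Subgroup.comap_map_eq (Abelianization.of : G →* _)
          (Subgroup.closure (Set.range g))
        rw [h1, Subgroup.comap_top, ker_abel_of] at h2
        exact h2.symm
      have htop : (⊤ : Subgroup G) ≤ H := by
        rw [← hclosure]
        exact sup_le (le_trans Subgroup.closure_le_normalClosure (le_of_eq hH.symm)) hcommH
      exact top_unique htop
    · -- N perfect
      set C := Subgroup.centralizer (N : Set G) with hC
      have hCnorm : C.Normal := by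
        constructor
        intro c hc t
        rw [Subgroup.mem_centralizer_iff] at hc ⊢
        intro n hn
        have hn' := hNnorm.conj_mem n hn t⁻¹
        rw [inv_inv] at hn'
        have key : (t⁻¹ * n * t) * c = c * (t⁻¹ * n * t) := hc _ hn'
        calc n * (t * c * t⁻¹) = t * ((t⁻¹ * n * t) * c) * t⁻¹ := by group
          _ = t * (c * (t⁻¹ * n * t)) * t⁻¹ := by rw [key]
          _ = (t * c * t⁻¹) * n := by group
      haveI := hCnorm
      have hNC : N ⊓ C = ⊥ := by
        rcases hNmin (N ⊓ C) inferInstance inf_le_left with h | h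
        · exact h
        · exfalso
          have hNleC : N ≤ C := by rw [← h]; exact inf_le_right
          have hNNbot : (⁅N, N⁆ : Subgroup G) = ⊥ := by
            rw [eq_bot_iff]
            rw [Subgroup.commutator_le]
            intro n1 hn1 n2 hn2
            rw [Subgroup.mem_bot, commutatorElement_eq_one_iff_commute]
            exact ((Subgroup.mem_centralizer_iff.mp (hNleC hn2)) n1 hn1)
          rw [hNN] at hNNbot
          exact hNbot hNNbot
      obtain ⟨n0, hn0N, hn0⟩ : ∃ x ∈ N, x ≠ (1 : G) := by
        by_contra h
        push_neg at h
        exact hNbot ((Subgroup.eq_bot_iff_forall N).mpr h)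
      set i0 : Fin d := ⟨0, hd⟩ with hi0
      obtain ⟨x, hxN, hxC⟩ : ∃ x ∈ N, g i0 * x ∉ C := by
        by_contra h
        push_neg at h
        have h1 : g i0 ∈ C := by simpa using h 1 N.one_mem
        have h2 : n0 ∈ C := by
          have h3 := C.mul_mem (C.inv_mem h1) (h n0 hn0N)
          rwa [inv_mul_cancel_left] at h3
        have : n0 ∈ N ⊓ C := ⟨hn0N, h2⟩
        rw [hNC, Subgroup.mem_bot] at this
        exact hn0 this
      set g' := Function.update g i0 (g i0 * x) with hg'
      have hg'i0 : g' i0 = g i0 * x := Function.update_self i0 _ g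
      have hg'ne : ∀ i, i ≠ i0 → g' i = g i := fun i hi => Function.update_of_ne hi _ g
      have hxcomm : x ∈ commutator G := by
        have hmem : x ∈ (⁅N, N⁆ : Subgroup G) := by rw [hNN]; exact hxN
        exact Subgroup.commutator_mono le_top le_top hmem
      have hofx : Abelianization.of x = 1 := by
        have : x ∈ (Abelianization.of : G →* _).ker := by rw [ker_abel_of]; exact hxcomm
        exact this
      have hπx : π x = 1 := by
        have : x ∈ π.ker := by rw [hπ, QuotientGroup.ker_mk']; exact hxN
        exact this
      have hg'a : ∀ i, Abelianization.of (g' i) = a i := by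
        intro i
        by_cases hi : i = i0
        · subst hi; rw [hg'i0, map_mul, hofx, mul_one, hga]
        · rw [hg'ne i hi, hga]
      have hg'π : ∀ i, π (g' i) = q i := by
        intro i
        by_cases hi : i = i0
        · subst hi; rw [hg'i0, map_mul, hπx, mul_one, hgπ]
        · rw [hg'ne i hi, hgπ]
      refine ⟨g', hg'a, ?_⟩
      set K := Subgroup.normalClosure (Set.range g') with hK
      haveI : K.Normal := Subgroup.normalClosure_normal
      have hmapK : Subgroup.map π K = ⊤ := hrangeπ g' hg'π
      rcases hNmin (K ⊓ N) inferInstance inf_le_right with h | h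
      · exfalso
        apply hxC
        rw [← hg'i0, hC, Subgroup.mem_centralizer_iff]
        intro m hm
        have hg'K : g' i0 ∈ K := Subgroup.subset_normalClosure ⟨i0, rfl⟩
        have hcm : ⁅g' i0, m⁆ ∈ K ⊓ N :=
          Subgroup.commutator_le_inf K N (Subgroup.commutator_mem_commutator hg'K hm)
        rw [h, Subgroup.mem_bot, commutatorElement_eq_one_iff_commute] at hcm
        exact hcm.symm.eq
      · have hNK : N ≤ K := by rw [← h]; exact inf_le_left
        exact eq_top_of_ker_le_of_map_top π
          (by rw [hπ, QuotientGroup.ker_mk']; exact hNK) hmapK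

/-- For a nontrivial finite group `G`, the least number `d` of elements whose normal
closure is all of `G` equals `max (d(Gᵃᵇ)) 1`, where `d(Gᵃᵇ)` is the minimal number of
generators of the abelianization of `G`. -/
theorem normal_generation_rank_eq (G : Type*) [Group G] [Finite G] [Nontrivial G] :
    sInf {d : ℕ | ∃ s : Finset G, s.card = d ∧ Subgroup.normalClosure (s : Set G) = ⊤} =
      max (sInf {d : ℕ | ∃ t : Finset (Abelianization G), t.card = d ∧
        Subgroup.closure (t : Set (Abelianization G)) = ⊤}) 1 := by
  classical
  set SL := {d : ℕ | ∃ s : Finset G, s.card = d ∧ Subgroup.normalClosure (s : Set G) = ⊤}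
    with hSL
  set SR := {d : ℕ | ∃ t : Finset (Abelianization G), t.card = d ∧
    Subgroup.closure (t : Set (Abelianization G)) = ⊤} with hSR
  haveI : Fintype G := Fintype.ofFinite G
  haveI : Fintype (Abelianization G) := Fintype.ofFinite _
  have hSLne : SL.Nonempty := by
    refine ⟨(Finset.univ : Finset G).card, Finset.univ, rfl, ?_⟩
    apply top_unique
    rw [← Subgroup.closure_univ, ← Finset.coe_univ]
    exact Subgroup.closure_le_normalClosure
  have hSRne : SR.Nonempty := by
    refine ⟨(Finset.univ : Finset (Abelianization G)).card, Finset.univ, rfl, ?_⟩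
    rw [Finset.coe_univ]
    exact Subgroup.closure_univ
  set L := sInf SL with hL
  set R := sInf SR with hR
  obtain ⟨s, hscard, hsclos⟩ : L ∈ SL := Nat.sInf_mem hSLne
  obtain ⟨t, htcard, htclos⟩ : R ∈ SR := Nat.sInf_mem hSRne
  have hL1 : 1 ≤ L := by
    rcases Nat.eq_zero_or_pos L with h0 | h1
    · exfalso
      rw [h0] at hscard
      have hs0 : s = ∅ := Finset.card_eq_zero.mp hscard
      rw [hs0, Finset.coe_empty] at hsclos
      have hle : Subgroup.normalClosure (∅ : Set G) ≤ ⊥ :=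
        Subgroup.normalClosure_le_normal (Set.empty_subset _)
      rw [hsclos] at hle
      exact absurd (le_antisymm bot_le hle) bot_ne_top
    · exact h1
  have hRL : R ≤ L := by
    have hmem : (s.image Abelianization.of).card ∈ SR := by
      refine ⟨s.image Abelianization.of, rfl, ?_⟩
      rw [Finset.coe_image]
      exact closure_abel_image_eq_top hsclos
    calc R ≤ (s.image Abelianization.of).card := Nat.sInf_le hmem
      _ ≤ s.card := Finset.card_image_le
      _ = L := hscard
  have hupper : L ≤ max R 1 := by
    have hA : ∃ a : Fin (max R 1) → Abelianization G,
        Subgroup.closure (Set.range a) = ⊤ := by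
      rcases Nat.eq_zero_or_pos R with hR0 | hRpos
      · refine ⟨fun _ => 1, ?_⟩
        rw [hR0] at htcard
        have ht0 : t = ∅ := Finset.card_eq_zero.mp htcard
        rw [ht0, Finset.coe_empty, Subgroup.closure_empty] at htclos
        rw [eq_top_iff, ← htclos]
        exact bot_le
      · have hcast : max R 1 = t.card := (max_eq_left hRpos).trans htcard.symm
        refine ⟨fun i => ↑(t.equivFin.symm (Fin.cast hcast i)), ?_⟩
        have hrange : Set.range (fun i : Fin (max R 1) =>
            (↑(t.equivFin.symm (Fin.cast hcast i)) : Abelianization G)) =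
            (t : Set (Abelianization G)) := by
          ext y
          constructor
          · rintro ⟨i, rfl⟩
            exact (t.equivFin.symm (Fin.cast hcast i)).2
          · intro hy
            obtain ⟨i, hi⟩ := t.equivFin.symm.surjective ⟨y, hy⟩
            refine ⟨Fin.cast hcast.symm i, ?_⟩
            have hci : Fin.cast hcast (Fin.cast hcast.symm i) = i := by ext; rfl
            simp only [hci, hi]
        rw [hrange]
        exact htclos
    obtain ⟨a, haa⟩ := hA
    obtain ⟨g, -, hg⟩ := key_aux (Nat.card G) G rfl (max R 1) (le_max_right R 1) a haa
    have hmem : (Finset.univ.image g).card ∈ SL := by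
      refine ⟨Finset.univ.image g, rfl, ?_⟩
      rw [Finset.coe_image, Finset.coe_univ, Set.image_univ]
      exact hg
    calc L ≤ (Finset.univ.image g).card := Nat.sInf_le hmem
      _ ≤ (Finset.univ : Finset (Fin (max R 1))).card := Finset.card_image_le
      _ = max R 1 := by simp
  exact le_antisymm hupper (max_le hRL hL1)
end

section
/- Let n, k be positive integers with n > 2k, and let σ ∈ S_n be a permutation all of whose cycles have length greater than k. Then for every ρ ∈ S_n conjugate to σ, the subgroup of S_n generated by S_{n-k} (the pointwise stabilizer of {n-k+1,...,n}) together with ρ is all of S_n. In other words, S_{n-k} and ⟨σ⟩ invariably generate S_n. -/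
/-- Let `n > 2k > 0` and let `σ ∈ S_n` have all cycles of length greater than `k`
(in particular no fixed points). Then `S_{n-k}` (the pointwise stabilizer of the last `k`
points) together with any conjugate `ρ` of `σ` generates `S_n`; that is, `S_{n-k}` and
`⟨σ⟩` invariably generate `S_n`. -/
theorem invariable_generation_Snk_cycles {n k : ℕ} (hk : 0 < k) (hn : 2 * k < n)
    (σ : Equiv.Perm (Fin n)) (hfix : ∀ x, σ x ≠ x) (hcyc : ∀ c ∈ σ.cycleType, k < c) :
    ∀ ρ : Equiv.Perm (Fin n), IsConj σ ρ →
      Subgroup.closure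
        ({π : Equiv.Perm (Fin n) | ∀ x : Fin n, n - k ≤ (x : ℕ) → π x = x} ∪ {ρ}) = ⊤ := by
  intro ρ hconj
  set S : Set (Equiv.Perm (Fin n)) :=
    {π : Equiv.Perm (Fin n) | ∀ x : Fin n, n - k ≤ (x : ℕ) → π x = x} ∪ {ρ} with hS
  set H : Subgroup (Equiv.Perm (Fin n)) := Subgroup.closure S with hH
  -- ρ ∈ H
  have hρH : ρ ∈ H := Subgroup.subset_closure (Or.inr rfl)
  -- permutations fixing the top k points are in H
  have hSH : ∀ π : Equiv.Perm (Fin n), (∀ x : Fin n, n - k ≤ (x : ℕ) → π x = x) → π ∈ H :=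
    fun π hπ => Subgroup.subset_closure (Or.inl hπ)
  -- ρ has the same cycle type as σ
  have hρcyc : ∀ c ∈ ρ.cycleType, k < c := by
    rw [← Equiv.Perm.isConj_iff_cycleType_eq.mp hconj]; exact hcyc
  -- ρ has no fixed points
  have hρfix : ∀ x, ρ x ≠ x := by
    obtain ⟨g, hg⟩ := isConj_iff.mp hconj
    intro x hx
    apply hfix (g⁻¹ x)
    have : (g * σ * g⁻¹) x = x := by rw [hg]; exact hx
    simp only [Equiv.Perm.mul_apply] at this
    have := g.injective (a₁ := σ (g⁻¹ x)) (a₂ := g⁻¹ x) (by simpa using this)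
    exact this
  -- the bottom and top finsets
  set B : Finset (Fin n) := Finset.univ.filter (fun x : Fin n => (x : ℕ) < n - k) with hB
  set T : Finset (Fin n) := Finset.univ.filter (fun x : Fin n => n - k ≤ (x : ℕ)) with hT
  have hBcard : B.card = n - k := by
    have himg : B.image Fin.val = Finset.range (n - k) := by
      ext a
      simp only [Finset.mem_image, Finset.mem_range, hB, Finset.mem_filter, Finset.mem_univ,
        true_and]
      constructor
      · rintro ⟨x, hx, rfl⟩; exact hx
      · intro ha; exact ⟨⟨a, by omega⟩, ha, rfl⟩
    have := Finset.card_image_of_injective B (Fin.val_injective)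
    rw [himg, Finset.card_range] at this
    omega
  have hTcard : T.card = k := by
    have hsplit := Finset.card_filter_add_card_filter_not
      (s := (Finset.univ : Finset (Fin n))) (p := fun x : Fin n => (x : ℕ) < n - k)
    have huniv : (Finset.univ : Finset (Fin n)).card = n := by simp
    have hTeq : Finset.univ.filter (fun x : Fin n => ¬ ((x : ℕ) < n - k)) = T := by
      ext x; simp [hT, Nat.not_lt]
    rw [hTeq, huniv] at hsplit
    rw [hB] at hBcard
    omega
  -- every point is on the same ρ-cycle as some bottom point
  have hcycle : ∀ x : Fin n, ∃ c : Fin n, (c : ℕ) < n - k ∧ ρ.SameCycle x c := by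
    intro x
    have hxsupp : x ∈ ρ.support := Equiv.Perm.mem_support.mpr (hρfix x)
    have hmem : ρ.cycleOf x ∈ ρ.cycleFactorsFinset :=
      Equiv.Perm.cycleOf_mem_cycleFactorsFinset_iff.mpr hxsupp
    have hbig : k < (ρ.cycleOf x).support.card := by
      apply hρcyc
      rw [Equiv.Perm.cycleType_def]
      exact Multiset.mem_map_of_mem _ (by simpa using hmem)
    by_contra hno
    push_neg at hno
    have hsub : (ρ.cycleOf x).support ⊆ T := by
      intro y hy
      rw [Equiv.Perm.mem_support_cycleOf_iff] at hy
      simp only [hT, Finset.mem_filter, Finset.mem_univ, true_and]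
      by_contra hlt
      exact absurd hy.1 (by intro h; exact absurd h (by
        have := hno y (by omega); tauto))
    have := Finset.card_le_card hsub
    omega
  -- step A : every top point swaps into the bottom within H
  have stepA : ∀ x : Fin n, n - k ≤ (x : ℕ) →
      ∃ b : Fin n, (b : ℕ) < n - k ∧ Equiv.swap x b ∈ H := by
    intro x hx
    obtain ⟨c, hc, i, hi⟩ := hcycle x
    set g : Equiv.Perm (Fin n) := ρ ^ i with hg
    have hgH : g ∈ H := zpow_mem hρH i
    -- find a bottom point b with g b also in the bottom
    have hb : ∃ b : Fin n, (b : ℕ) < n - k ∧ ((g b : Fin n) : ℕ) < n - k := by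
      by_contra hno
      push_neg at hno
      have hsub : B.image g ⊆ T := by
        intro y hy
        obtain ⟨b, hbB, rfl⟩ := Finset.mem_image.mp hy
        simp only [hB, Finset.mem_filter, Finset.mem_univ, true_and] at hbB
        simp only [hT, Finset.mem_filter, Finset.mem_univ, true_and]
        exact hno b hbB
      have h1 := Finset.card_le_card hsub
      rw [Finset.card_image_of_injective _ g.injective] at h1
      omega
    obtain ⟨b, hbB, hgbB⟩ := hb
    -- swap c (g b) fixes all top points, hence lies in H
    have hswap1 : Equiv.swap c (g b) ∈ H := by
      apply hSH
      intro y hy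
      apply Equiv.swap_apply_of_ne_of_ne
      · intro h; rw [h] at hy; omega
      · intro h; rw [h] at hy; omega
    -- conjugate it back by g
    have hconjswap : Equiv.swap (g⁻¹ c) (g⁻¹ (g b)) = g⁻¹ * Equiv.swap c (g b) * g := by
      have := Equiv.swap_apply_apply g⁻¹ c (g b)
      simpa using this
    have hxc : g⁻¹ c = x := by
      apply g.injective; simp [hi]
    refine ⟨b, hbB, ?_⟩
    have : Equiv.swap x b ∈ H := by
      rw [← hxc, ← (show g⁻¹ (g b) = b by simp), hconjswap]
      exact mul_mem (mul_mem (inv_mem hgH) hswap1) hgH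
    exact this
  -- step B : swaps of two bottom points lie in H
  have stepB : ∀ a b : Fin n, (a : ℕ) < n - k → (b : ℕ) < n - k → Equiv.swap a b ∈ H := by
    intro a b ha hb
    apply hSH
    intro y hy
    apply Equiv.swap_apply_of_ne_of_ne
    · intro h; rw [h] at hy; omega
    · intro h; rw [h] at hy; omega
  -- step C : swap of any point with a bottom point lies in H
  have stepC : ∀ x b : Fin n, (b : ℕ) < n - k → Equiv.swap x b ∈ H := by
    intro x b hb
    by_cases hx : (x : ℕ) < n - k
    · exact stepB x b hx hb
    · push_neg at hx
      obtain ⟨b', hb', hswap⟩ := stepA x hx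
      by_cases hbb : b' = b
      · rwa [hbb] at hswap
      · have hswap2 : Equiv.swap b b' ∈ H := stepB b b' hb hb'
        have key : Equiv.swap x b =
            Equiv.swap b b' * Equiv.swap x b' * (Equiv.swap b b')⁻¹ := by
          have := Equiv.swap_apply_apply (Equiv.swap b b') x b'
          rw [Equiv.swap_apply_of_ne_of_ne (by intro h; rw [h] at hx; omega)
            (by intro h; rw [h] at hx; omega), Equiv.swap_apply_right] at this
          exact this
        rw [key]
        exact mul_mem (mul_mem hswap2 hswap) (inv_mem hswap2)
  -- now: every swap lies in H
  rw [eq_top_iff, ← Equiv.Perm.closure_isSwap, Subgroup.closure_le]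
  rintro π ⟨a, b, hab, rfl⟩
  show Equiv.swap a b ∈ H
  by_cases hb : (b : ℕ) < n - k
  · exact stepC a b hb
  · by_cases ha : (a : ℕ) < n - k
    · rw [Equiv.swap_comm]; exact stepC b a ha
    · push_neg at ha hb
      -- both top; pick a bottom point c
      have hc0 : (0 : ℕ) < n - k := by omega
      set c : Fin n := ⟨0, by omega⟩ with hcdef
      have hcb : (c : ℕ) < n - k := hc0
      have h1 : Equiv.swap a c ∈ H := stepC a c hcb
      have h2 : Equiv.swap b c ∈ H := stepC b c hcb
      have key : Equiv.swap a b =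
          Equiv.swap b c * Equiv.swap a c * (Equiv.swap b c)⁻¹ := by
        have := Equiv.swap_apply_apply (Equiv.swap b c) a c
        rw [Equiv.swap_apply_of_ne_of_ne hab (by intro h; rw [h] at ha; omega),
          Equiv.swap_apply_right] at this
        exact this
      rw [key]
      exact mul_mem (mul_mem h2 h1) (inv_mem h2)
end

section
/- Let n_1,...,n_r, k be integers with min{n_1,...,n_r} > 2k > 0, and let g ∈ S_{n_1} × ... × S_{n_r} be such that, for every i, all cycles of the projection of g to S_{n_i} have length greater than k. Then for every conjugate ρ of g in S_{n_1} × ... × S_{n_r}, the subgroup generated by S_{n_1-k} × ... × S_{n_r-k} and ρ is all of S_{n_1} × ... × S_{n_r}. -/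
open Equiv Equiv.Perm Subgroup

section Single

variable {n k : ℕ}

private lemma swap_fixes_big {a b x : Fin n} (ha : (a : ℕ) < n - k) (hb : (b : ℕ) < n - k)
    (hx : n - k ≤ (x : ℕ)) : Equiv.swap a b x = x := by
  apply Equiv.swap_apply_of_ne_of_ne <;> rintro rfl <;> omega

private lemma smallset_card (hk : 0 < k) (hn : 2 * k < n) :
    (Finset.univ.filter fun y : Fin n => (y : ℕ) < n - k).card = n - k := by
  have hlt : n - k < n := by omega
  have : (Finset.univ.filter fun y : Fin n => (y : ℕ) < n - k) = Finset.Iio (⟨n - k, hlt⟩ : Fin n) := by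
    ext y
    simp [Finset.mem_Iio, Fin.lt_def]
  rw [this, Fin.card_Iio]

/-- Single-factor lemma: `S_{n-k}` together with a permutation all of whose cycles have
length `> k` generates `S_n`, when `n > 2k > 0`. -/
lemma single_factor_generation (hk : 0 < k) (hn : 2 * k < n) (σ : Equiv.Perm (Fin n))
    (hfix : ∀ x, σ x ≠ x) (hcyc : ∀ c ∈ σ.cycleType, k < c) :
    Subgroup.closure
      ({π : Equiv.Perm (Fin n) | ∀ x : Fin n, n - k ≤ (x : ℕ) → π x = x} ∪ {σ}) = ⊤ := by
  classical
  set G := Subgroup.closure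
      ({π : Equiv.Perm (Fin n) | ∀ x : Fin n, n - k ≤ (x : ℕ) → π x = x} ∪ {σ}) with hG
  have hσG : σ ∈ G := Subgroup.subset_closure (Or.inr rfl)
  have hHG : ∀ π : Equiv.Perm (Fin n), (∀ x : Fin n, n - k ≤ (x : ℕ) → π x = x) → π ∈ G :=
    fun π hπ => Subgroup.subset_closure (Or.inl hπ)
  have hswap : ∀ a b : Fin n, (a : ℕ) < n - k → (b : ℕ) < n - k → Equiv.swap a b ∈ G :=
    fun a b ha hb => hHG _ (fun x hx => swap_fixes_big ha hb hx)
  -- counting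
  have hsmall := smallset_card hk hn
  -- Step 1: every point can be moved into the small region by a power of σ
  have step1 : ∀ x : Fin n, ∃ g ∈ G, ((g x : Fin n) : ℕ) < n - k := by
    intro x
    have hxs : x ∈ σ.support := mem_support.2 (hfix x)
    have hcard : k < (σ.cycleOf x).support.card := by
      apply hcyc
      rw [cycleType_def]
      refine Multiset.mem_map.2 ⟨σ.cycleOf x, ?_, rfl⟩
      rw [← Finset.mem_def]
      exact (cycleOf_mem_cycleFactorsFinset_iff).2 hxs
    -- the cycle of x is not contained in the big region
    have : ∃ y ∈ (σ.cycleOf x).support, (y : ℕ) < n - k := by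
      by_contra h
      push_neg at h
      have hdisj : Disjoint ((σ.cycleOf x).support)
          (Finset.univ.filter fun y : Fin n => (y : ℕ) < n - k) := by
        rw [Finset.disjoint_left]
        intro y hy hy2
        simp only [Finset.mem_filter, Finset.mem_univ, true_and] at hy2
        have := h y hy
        omega
      have hun : ((σ.cycleOf x).support ∪
          (Finset.univ.filter fun y : Fin n => (y : ℕ) < n - k)).card ≤ n := by
        calc _ ≤ (Finset.univ : Finset (Fin n)).card :=
          Finset.card_le_card (Finset.subset_univ _)
        _ = n := by simp
      rw [Finset.card_union_of_disjoint hdisj] at hun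
      omega
    obtain ⟨y, hy, hysmall⟩ := this
    have hsc : σ.SameCycle x y := (mem_support_cycleOf_iff.1 hy).1
    obtain ⟨m, hm⟩ := hsc
    exact ⟨σ ^ m, Subgroup.zpow_mem G hσG m, by rw [hm]; exact hysmall⟩
  have hz0 : (0 : ℕ) < n - k := by omega
  set z0 : Fin n := ⟨0, by omega⟩ with hz0def
  -- Step 2: transitivity through z0
  have step2 : ∀ x : Fin n, ∃ g ∈ G, g x = z0 := by
    intro x
    obtain ⟨g, hg, hgx⟩ := step1 x
    refine ⟨Equiv.swap (g x) z0 * g, mul_mem (hswap _ _ hgx hz0) hg, ?_⟩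
    simp [Equiv.swap_apply_left]
  have step2' : ∀ x : Fin n, ∃ g ∈ G, g z0 = x := by
    intro x
    obtain ⟨g, hg, hgx⟩ := step2 x
    exact ⟨g⁻¹, inv_mem hg, by rw [← hgx]; simp⟩
  -- Step 3: the "swap class" of each point is large
  have step3 : ∀ x : Fin n,
      n - k ≤ (insert x (Finset.univ.filter fun y => Equiv.swap x y ∈ G)).card := by
    intro x
    obtain ⟨g, hg, hgz⟩ := step2' x
    have hinj : Set.InjOn (⇑g) (Finset.univ.filter fun y : Fin n => (y : ℕ) < n - k) :=
      fun a _ b _ h => g.injective h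
    have hmaps : ∀ y ∈ (Finset.univ.filter fun y : Fin n => (y : ℕ) < n - k),
        g y ∈ insert x (Finset.univ.filter fun y => Equiv.swap x y ∈ G) := by
      intro y hy
      simp only [Finset.mem_filter, Finset.mem_univ, true_and] at hy
      by_cases hyz : y = z0
      · subst hyz; rw [hgz]; exact Finset.mem_insert_self _ _
      · refine Finset.mem_insert_of_mem ?_
        simp only [Finset.mem_filter, Finset.mem_univ, true_and]
        have : Equiv.swap (g z0) (g y) = g * Equiv.swap z0 y * g⁻¹ :=
          Equiv.swap_apply_apply g z0 y
        rw [← hgz]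
        rw [this]
        exact mul_mem (mul_mem hg (hswap _ _ hz0 hy)) (inv_mem hg)
    calc n - k = (Finset.univ.filter fun y : Fin n => (y : ℕ) < n - k).card := hsmall.symm
    _ ≤ _ := Finset.card_le_card_of_injOn _ hmaps hinj
  -- Step 4: all swaps are in G
  have step4 : ∀ x y : Fin n, x ≠ y → Equiv.swap x y ∈ G := by
    intro x y hxy
    have h1 := step3 x
    have h2 := step3 y
    have hinter : ((insert x (Finset.univ.filter fun z => Equiv.swap x z ∈ G)) ∩
        (insert y (Finset.univ.filter fun z => Equiv.swap y z ∈ G))).Nonempty := by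
      rw [← Finset.card_pos]
      have hun : ((insert x (Finset.univ.filter fun z => Equiv.swap x z ∈ G)) ∪
          (insert y (Finset.univ.filter fun z => Equiv.swap y z ∈ G))).card ≤ n := by
        calc _ ≤ (Finset.univ : Finset (Fin n)).card :=
          Finset.card_le_card (Finset.subset_univ _)
        _ = n := by simp
      have hie := Finset.card_union_add_card_inter
        (insert x (Finset.univ.filter fun z => Equiv.swap x z ∈ G))
        (insert y (Finset.univ.filter fun z => Equiv.swap y z ∈ G))
      omega
    obtain ⟨z, hz⟩ := hinter
    rw [Finset.mem_inter, Finset.mem_insert, Finset.mem_insert,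
      Finset.mem_filter, Finset.mem_filter] at hz
    obtain ⟨hzx, hzy⟩ := hz
    by_cases hx1 : z = x
    · rcases hzy with h | ⟨-, hsy⟩
      · exact absurd (hx1.symm.trans h) hxy
      · rw [hx1] at hsy
        exact (Equiv.swap_comm y x) ▸ hsy
    by_cases hy1 : z = y
    · rcases hzx with h | ⟨-, hsx⟩
      · exact absurd (h.symm.trans hy1) hxy
      · rw [hy1] at hsx
        exact hsx
    have hsx : Equiv.swap x z ∈ G := by
      rcases hzx with h | ⟨-, hsx⟩
      · exact absurd h hx1
      · exact hsx
    have hsy : Equiv.swap y z ∈ G := by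
      rcases hzy with h | ⟨-, hsy⟩
      · exact absurd h hy1
      · exact hsy
    have key : Equiv.swap ((Equiv.swap x z) y) ((Equiv.swap x z) z)
        = Equiv.swap x z * Equiv.swap y z * (Equiv.swap x z)⁻¹ :=
      Equiv.swap_apply_apply _ y z
    rw [Equiv.swap_apply_of_ne_of_ne hxy.symm (fun h => hy1 h.symm),
      Equiv.swap_apply_right] at key
    have : Equiv.swap x y = Equiv.swap y x := Equiv.swap_comm x y
    rw [this, key]
    exact mul_mem (mul_mem hsx hsy) (inv_mem hsx)
  -- conclude
  rw [eq_top_iff, ← Equiv.Perm.closure_isSwap, Subgroup.closure_le]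
  rintro τ ⟨a, b, hab, rfl⟩
  exact step4 a b hab

end Single

/-- If `min n i > 2k > 0` and `g ∈ S_{n 1} × … × S_{n r}` has, in every coordinate, all
cycles of length greater than `k` (in particular no fixed points), then the product
`S_{n 1 - k} × … × S_{n r - k}` (pointwise stabilizers of the last `k` points of each
block) together with any conjugate `ρ` of `g` generates the whole product; that is, they
invariably generate it. -/
theorem product_invariable_generation {r k : ℕ} (n : Fin r → ℕ) (hk : 0 < k)
    (hn : ∀ i, 2 * k < n i) (g : ∀ i, Equiv.Perm (Fin (n i)))
    (hfix : ∀ i x, g i x ≠ x) (hcyc : ∀ i, ∀ c ∈ (g i).cycleType, k < c) :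
    ∀ ρ : ∀ i, Equiv.Perm (Fin (n i)), IsConj g ρ →
      Subgroup.closure
        ({π : ∀ i, Equiv.Perm (Fin (n i)) |
            ∀ i, ∀ x : Fin (n i), n i - k ≤ (x : ℕ) → π i x = x} ∪ {ρ}) = ⊤ := by
  classical
  intro ρ hconj
  obtain ⟨c, hc⟩ := isConj_iff.1 hconj
  -- hc : c * g * c⁻¹ = ρ
  have hρ : ∀ i, ρ i = c i * g i * (c i)⁻¹ := by
    intro i
    have : (c * g * c⁻¹) i = ρ i := by rw [hc]
    simp only [Pi.mul_apply, Pi.inv_apply] at this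
    exact this.symm
  have hρfix : ∀ i x, ρ i x ≠ x := by
    intro i x h
    rw [hρ i] at h
    simp only [Equiv.Perm.coe_mul, Function.comp_apply] at h
    apply hfix i ((c i)⁻¹ x)
    have := congrArg ((c i)⁻¹ : Equiv.Perm (Fin (n i))) h
    simpa using this
  have hρcyc : ∀ i, ∀ d ∈ (ρ i).cycleType, k < d := by
    intro i d hd
    rw [hρ i, Equiv.Perm.cycleType_conj] at hd
    exact hcyc i d hd
  set G := Subgroup.closure
        ({π : ∀ i, Equiv.Perm (Fin (n i)) |
            ∀ i, ∀ x : Fin (n i), n i - k ≤ (x : ℕ) → π i x = x} ∪ {ρ}) with hGdef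
  have hρG : ρ ∈ G := Subgroup.subset_closure (Or.inr rfl)
  have hHG : ∀ π : ∀ i, Equiv.Perm (Fin (n i)),
      (∀ i, ∀ x : Fin (n i), n i - k ≤ (x : ℕ) → π i x = x) → π ∈ G :=
    fun π hπ => Subgroup.subset_closure (Or.inl hπ)
  -- conjugation of mulSingle by ρ
  have hconjSingle : ∀ (τ : ∀ i, Equiv.Perm (Fin (n i))) (i : Fin r) (σ : Equiv.Perm (Fin (n i))),
      τ * Pi.mulSingle i σ * τ⁻¹ = Pi.mulSingle i (τ i * σ * (τ i)⁻¹) := by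
    intro τ i σ
    funext j
    by_cases hji : j = i
    · subst hji; simp
    · simp [Pi.mulSingle_eq_of_ne hji]
  -- each single-coordinate subgroup is in G
  have hKtop : ∀ (i : Fin r) (σ : Equiv.Perm (Fin (n i))), Pi.mulSingle i σ ∈ G := by
    intro i
    set Ki : Subgroup (Equiv.Perm (Fin (n i))) :=
      G.comap (MonoidHom.mulSingle (fun j => Equiv.Perm (Fin (n j))) i) with hKi
    have hHKi : ∀ σ : Equiv.Perm (Fin (n i)),
        (∀ x : Fin (n i), n i - k ≤ (x : ℕ) → σ x = x) → σ ∈ Ki := by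
      intro σ hσ
      refine hHG _ ?_
      intro j x hx
      by_cases hji : j = i
      · subst hji; simpa using hσ x hx
      · simp [MonoidHom.mulSingle_apply, Pi.mulSingle_eq_of_ne hji]
    -- Ki is normal
    have hnorm : Ki.Normal := by
      rw [← Subgroup.normalizer_eq_top_iff, eq_top_iff,
        ← single_factor_generation hk (hn i) (ρ i) (hρfix i) (hρcyc i), Subgroup.closure_le]
      rintro τ (hτ | rfl) <;> simp only [SetLike.mem_coe]
      · exact Subgroup.le_normalizer (hHKi τ hτ)
      · rw [Subgroup.mem_normalizer_iff]
        intro h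
        simp only [hKi, Subgroup.mem_comap, MonoidHom.mulSingle_apply]
        constructor
        · intro hh
          rw [← hconjSingle ρ i h]
          exact mul_mem (mul_mem hρG hh) (inv_mem hρG)
        · intro hh
          rw [← hconjSingle ρ i h] at hh
          have h2 : Pi.mulSingle i h = ρ⁻¹ * (ρ * Pi.mulSingle i h * ρ⁻¹) * ρ := by group
          rw [h2]
          exact mul_mem (mul_mem (inv_mem hρG) hh) hρG
    -- Ki contains a swap
    have hni := hn i
    have h0 : 0 < n i := by omega
    have h1 : 1 < n i := by omega
    have hab : (⟨0, h0⟩ : Fin (n i)) ≠ ⟨1, h1⟩ := by simp [Fin.ext_iff]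
    have hswapKi : Equiv.swap (⟨0, h0⟩ : Fin (n i)) ⟨1, h1⟩ ∈ Ki := by
      apply hHKi
      intro x hx
      apply Equiv.swap_apply_of_ne_of_ne
      · intro h; rw [h] at hx; simp only [] at hx; omega
      · intro h; rw [h] at hx; simp only [] at hx; omega
    -- hence Ki = ⊤
    have hKitop : Ki = ⊤ := by
      rw [eq_top_iff, ← Equiv.Perm.closure_isSwap, Subgroup.closure_le]
      rintro τ ⟨x, y, hxy, rfl⟩
      obtain ⟨u, hu⟩ := isConj_iff.1 (Equiv.Perm.isConj_swap hab hxy)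
      rw [← hu]
      exact hnorm.conj_mem _ hswapKi u
    intro σ
    have : σ ∈ Ki := hKitop ▸ Subgroup.mem_top σ
    exact this
  -- every π is a finite product of mulSingles
  rw [eq_top_iff]
  intro π _
  have key : ∀ s : Finset (Fin r), ∀ π : ∀ i, Equiv.Perm (Fin (n i)),
      (∀ j ∉ s, π j = 1) → π ∈ G := by
    intro s
    induction s using Finset.induction_on with
    | empty =>
      intro π hπ
      have : π = 1 := by funext j; simpa using hπ j (by simp)
      rw [this]; exact one_mem G
    | @insert i s hi ih =>
      intro π hπ
      have hdecomp : π = Pi.mulSingle i (π i) * Function.update π i 1 := by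
        funext j
        by_cases hji : j = i
        · subst hji; simp
        · simp [Pi.mulSingle_eq_of_ne hji, Function.update_of_ne hji]
      rw [hdecomp]
      refine mul_mem (hKtop i (π i)) (ih _ ?_)
      intro j hj
      by_cases hji : j = i
      · subst hji; simp
      · rw [Function.update_of_ne hji]
        exact hπ j (by simp [hji, hj])
  exact key Finset.univ π (fun j hj => absurd (Finset.mem_univ j) hj)
end

section
/- Let S be a semigroup and z an element of the center of S. Then there exists a monoid S[z^{-1}] and a semigroup homomorphism φ: S → S[z^{-1}] with φ(z) invertible, satisfying the universal property: for every monoid M and semigroup homomorphism ψ: S → M with ψ(z) invertible, there is a unique monoid homomorphism θ: S[z^{-1}] → M with ψ = θ ∘ φ. -/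
universe u v

/-- Localization of a semigroup at a central element: for every semigroup `S` and central
element `z ∈ S`, there exist a monoid `M` and a semigroup homomorphism `φ : S → M` with
`φ z` invertible, such that every semigroup homomorphism `ψ : S → N` to a monoid with
`ψ z` invertible factors uniquely through `φ` via a monoid homomorphism. -/
theorem semigroup_localization_at_central {S : Type u} [Semigroup S] (z : S)
    (hz : ∀ s : S, z * s = s * z) :
    ∃ (M : MonCat.{u}) (φ : S →ₙ* M), IsUnit (φ z) ∧
      ∀ (N : MonCat.{v}) (ψ : S →ₙ* N), IsUnit (ψ z) →
        ∃! θ : (M : Type u) →* N, θ.toMulHom.comp φ = ψ := by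
  classical
  set R := WithOne S
  set z' : R := (z : R)
  -- z' is central in R
  have hz' : ∀ x : R, z' * x = x * z' := by
    intro x
    refine WithOne.cases_on x (by simp) fun s => ?_
    show ((z : R) * (s : R) = (s : R) * (z : R))
    exact_mod_cast hz s
  set Z : Submonoid R := Submonoid.powers z' with hZ
  have hZcentral : ∀ (u : Z) (x : R), (u : R) * x = x * (u : R) := by
    rintro ⟨_, n, rfl⟩ x
    induction n with
    | zero => simp
    | succ n ih =>
      simp only [pow_succ]
      rw [mul_assoc, hz' x, ← mul_assoc, ih, mul_assoc]
  haveI : OreLocalization.OreSet Z :=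
    { ore_right_cancel := fun r₁ r₂ s h => ⟨s, by rw [hZcentral s r₁, hZcentral s r₂, h]⟩
      oreNum := fun r s => r
      oreDenom := fun r s => s
      ore_eq := fun r s => hZcentral s r }
  refine ⟨MonCat.of (OreLocalization Z R),
    (OreLocalization.numeratorHom.toMulHom.comp (WithOne.coeMulHom : S →ₙ* R)), ?_, ?_⟩
  · exact OreLocalization.numerator_isUnit ⟨z', Submonoid.mem_powers z'⟩
  · intro N ψ hψ
    set ψ' : R →* N := WithOne.lift ψ
    have hψ' : ∀ x : Z, IsUnit (ψ' (x : R)) := by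
      rintro ⟨_, n, rfl⟩
      simp only [map_pow]
      exact (by rw [show ψ' z' = ψ z from WithOne.lift_coe ψ z]; exact hψ : IsUnit (ψ' z')).pow n
    set fS : Z →* Nˣ :=
      { toFun := fun x => (hψ' x).unit
        map_one' := by ext; simp
        map_mul' := fun x y => by ext; simp }
    have hf : ∀ s : Z, ψ' (s : R) = fS s := fun s => rfl
    refine ⟨OreLocalization.universalMulHom ψ' fS hf, ?_, ?_⟩
    · ext s
      exact (OreLocalization.universalMulHom_commutes (f := ψ') (fS := fS) (hf := hf) (r := (s : R))).trans (WithOne.lift_coe ψ s)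
    · intro θ hθ
      refine OreLocalization.universalMulHom_unique ψ' fS hf θ ?_
      intro r
      refine WithOne.cases_on r (by simp only [map_one]) fun s => ?_
      exact congrFun (congrArg (fun (f : S →ₙ* N) => (f : S → N)) hθ) s
end

section
/- Let X be a finite rack, and for x ∈ X let m_x be the order of the image of x in Inn(X). Let z = ∏_{x∈X} x^{m_x} in the structure semigroup S_X (this element is central). Then the natural monoid homomorphism S_X[z^{-1}] → Γ_X to the structure group of X is an isomorphism. -/
open Quandles

universe u

/-- The defining congruence of the structure semigroup `S_X = ⟨X : x y = (x ◃ y) x⟩`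
of a rack (written here with Mathlib's left-rack convention, mirroring `x y = y x^y`). -/
def structCon (X : Type u) [Rack X] : Con (FreeSemigroup X) :=
  conGen (fun a b => ∃ x y : X, a = .of x * .of y ∧ b = .of (x ◃ y) * .of x)

/-- The structure semigroup `S_X` of a rack `X`. -/
def StructSemigroup (X : Type u) [Rack X] := (structCon X).Quotient

instance (X : Type u) [Rack X] : Semigroup (StructSemigroup X) := by
  unfold StructSemigroup; infer_instance

/-- The canonical map `X → S_X`. -/
def toStructSemigroup {X : Type u} [Rack X] (x : X) : StructSemigroup X :=
  ((FreeSemigroup.of x : FreeSemigroup X) : (structCon X).Quotient)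

/-- `sPow x n = x^(n+1)` in a semigroup. -/
def sPow {S : Type*} [Semigroup S] (x : S) : ℕ → S
  | 0 => x
  | n + 1 => sPow x n * x

/-- Product of a nonempty list in a semigroup, `sProdList a l = a * l.prod`. -/
def sProdList {S : Type*} [Semigroup S] : S → List S → S
  | a, [] => a
  | a, b :: l => a * sProdList b l

/-- The central element `z = ∏_{x ∈ X} x^{m_x}` of `S_X`, where `m_x` is the order of
the inner automorphism determined by `x`. -/
noncomputable def rackZ (X : Type u) [Rack X] [Fintype X] [Nonempty X] :
    StructSemigroup X :=
  match (Finset.univ : Finset X).toList.map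
      (fun x => sPow (toStructSemigroup x) (orderOf (Rack.act' x) - 1)) with
  | [] => toStructSemigroup (Classical.arbitrary X)
  | a :: l => sProdList a l


section Aux

variable {X : Type u} [Rack X]

lemma t_mul (x y : X) :
    toStructSemigroup x * toStructSemigroup y
      = toStructSemigroup (x ◃ y) * toStructSemigroup x := by
  unfold toStructSemigroup
  show ((FreeSemigroup.of x * FreeSemigroup.of y : FreeSemigroup X) : (structCon X).Quotient)
    = ((FreeSemigroup.of (x ◃ y) * FreeSemigroup.of x : FreeSemigroup X) : (structCon X).Quotient)
  exact (structCon X).eq.mpr (ConGen.Rel.of _ _ ⟨x, y, rfl, rfl⟩)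

lemma struct_induction {p : StructSemigroup X → Prop}
    (hof : ∀ x : X, p (toStructSemigroup x))
    (hmul : ∀ a b, p a → p b → p (a * b)) : ∀ s, p s := by
  intro s
  induction s using Con.induction_on with
  | H a =>
    induction a using FreeSemigroup.recOnMul with
    | ih1 x => exact hof x
    | ih2 a b ha hb => rw [Con.coe_mul]; exact hmul _ _ ha hb

lemma sPow_mul_t (x : X) (n : ℕ) (y : X) :
    sPow (toStructSemigroup x) n * toStructSemigroup y
      = toStructSemigroup ((Rack.act' x ^ (n + 1)) y) * sPow (toStructSemigroup x) n := by
  induction n generalizing y with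
  | zero => simpa [sPow, Rack.act'_apply] using t_mul x y
  | succ n ih =>
    have h : ((Rack.act' x) ^ (n + 2)) y = ((Rack.act' x) ^ (n + 1)) (x ◃ y) := by
      rw [pow_succ, Equiv.Perm.mul_apply, Rack.act'_apply]
    show sPow _ n * toStructSemigroup x * toStructSemigroup y = _
    rw [mul_assoc, t_mul x y, ← mul_assoc, ih (x ◃ y), ← h]
    show _ = _ * (sPow _ n * toStructSemigroup x)
    rw [mul_assoc]

end Aux

section Aux2

variable {X : Type u} [Rack X]

/-- the "central power" of a generator -/
noncomputable def cPow [Fintype X] (x : X) : StructSemigroup X :=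
  sPow (toStructSemigroup x) (orderOf (Rack.act' x) - 1)

lemma cPow_central [Fintype X] (x : X) :
    ∀ s : StructSemigroup X, s * cPow x = cPow x * s := by
  have hpos : 0 < orderOf (Rack.act' x) := orderOf_pos _
  refine struct_induction (fun y => ?_) (fun a b ha hb => ?_)
  · unfold cPow
    rw [sPow_mul_t, Nat.sub_add_cancel hpos, pow_orderOf_eq_one, Equiv.Perm.one_apply]
  · rw [mul_assoc, hb, ← mul_assoc, ha, mul_assoc]

lemma hom_ext {M : Type*} [Mul M] {f g : StructSemigroup X →ₙ* M}
    (h : ∀ x, f (toStructSemigroup x) = g (toStructSemigroup x)) : f = g := by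
  ext s
  refine struct_induction (p := fun s => f s = g s) h (fun a b ha hb => ?_) s
  show f (a * b) = g (a * b)
  rw [map_mul, map_mul]
  exact congrArg₂ (· * ·) ha hb

lemma map_sPow {M : Type*} [Monoid M] (φ : StructSemigroup X →ₙ* M)
    (a : StructSemigroup X) (n : ℕ) : φ (sPow a n) = φ a ^ (n + 1) := by
  induction n with
  | zero => simp [sPow]
  | succ n ih => rw [sPow, map_mul, ih, ← pow_succ]

lemma map_sProdList {M : Type*} [Monoid M] (φ : StructSemigroup X →ₙ* M) :
    ∀ (l : List (StructSemigroup X)) (a), φ (sProdList a l) = φ a * (l.map φ).prod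
  | [], a => by simp [sProdList]
  | b :: l, a => by
      rw [sProdList, map_mul, map_sProdList φ l b, List.map_cons, List.prod_cons]

lemma pairwise_of_forall {α : Type*} {R : α → α → Prop} (h : ∀ a b, R a b) :
    ∀ l : List α, l.Pairwise R
  | [] => List.Pairwise.nil
  | a :: l => List.Pairwise.cons (fun b _ => h a b) (pairwise_of_forall h l)

end Aux2

/-- For a finite rack `X`, the localization `S_X[z⁻¹]` of the structure semigroup at the
central element `z = ∏_{x ∈ X} x^{m_x}` is isomorphic, via the natural monoid
homomorphism, to the structure group `Γ_X`: any monoid `L` receiving `S_X` and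
satisfying the universal property of the localization at `z` maps isomorphically onto
`Γ_X` under the natural homomorphism (the one compatible with the generators). -/
theorem structSemigroup_localization_iso_envelGroup (X : Type u) [Rack X] [Fintype X]
    [Nonempty X] (L : MonCat.{u}) (φ : StructSemigroup X →ₙ* L)
    (hunit : IsUnit (φ (rackZ X)))
    (huniv : ∀ (N : MonCat.{u}) (ψ : StructSemigroup X →ₙ* N), IsUnit (ψ (rackZ X)) →
      ∃! θ : (L : Type u) →* N, θ.toMulHom.comp φ = ψ)
    (θ : (L : Type u) →* Rack.EnvelGroup X)
    (hθ : ∀ x : X, θ (φ (toStructSemigroup x)) = Rack.toEnvelGroup X x) :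
    Function.Bijective θ := by
  classical
  set g : X → (L : Type u) := fun x => φ (cPow x) with hg
  -- univ.toList is nonempty
  obtain ⟨a, l, ha⟩ := List.exists_cons_of_ne_nil (l := (Finset.univ : Finset X).toList)
    (by
      intro h
      exact (Finset.univ_nonempty (α := X)).ne_empty (Finset.toList_eq_nil.mp h))
  have hz0 : rackZ X = sProdList (cPow a)
      (l.map (fun x => sPow (toStructSemigroup x) (orderOf (Rack.act' x) - 1))) := by
    unfold rackZ
    rw [ha]
    rfl
  have hzφ : φ (rackZ X) = ((Finset.univ : Finset X).toList.map g).prod := by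
    rw [hz0, map_sProdList, ha, List.map_cons, List.prod_cons, List.map_map]
    rfl
  have hcomm : ∀ x y : X, Commute (g x) (g y) := by
    intro x y
    show φ (cPow x) * φ (cPow y) = φ (cPow y) * φ (cPow x)
    rw [← map_mul, ← map_mul, cPow_central y (cPow x)]
  -- each generator maps to a unit
  have hunit' : ∀ x : X, IsUnit (φ (toStructSemigroup x)) := by
    intro x
    have hx : x ∈ (Finset.univ : Finset X).toList := by simp
    have hperm : List.Perm ((Finset.univ : Finset X).toList.map g)
        (g x :: (((Finset.univ : Finset X).toList.erase x).map g)) := by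
      simpa using (List.perm_cons_erase hx).map g
    have hpair : ((Finset.univ : Finset X).toList.map g).Pairwise Commute := by
      rw [List.pairwise_map]
      exact pairwise_of_forall (fun a b => hcomm a b) _
    have hzz : φ (rackZ X)
        = g x * ((((Finset.univ : Finset X).toList.erase x).map g).prod) := by
      rw [hzφ, hperm.prod_eq' hpair, List.prod_cons]
    have hcr : Commute (g x) ((((Finset.univ : Finset X).toList.erase x).map g).prod) :=
      Commute.list_prod_right _ _ (fun u hu => by
        obtain ⟨y, -, rfl⟩ := List.mem_map.mp hu
        exact hcomm x y)
    have h1 : IsUnit (g x) := (hcr.isUnit_mul_iff.mp (hzz ▸ hunit)).1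
    have h2 : IsUnit (φ (toStructSemigroup x) ^ ((orderOf (Rack.act' x) - 1) + 1)) := by
      rw [← map_sPow]
      exact h1
    exact isUnit_pow_succ_iff.mp h2
  set u : X → (L : Type u)ˣ := fun x => (hunit' x).unit with hu
  have huval : ∀ x : X, (u x : L) = φ (toStructSemigroup x) := fun x => (hunit' x).unit_spec
  -- shelf hom into Conj Lˣ
  set sh : X →◃ Quandle.Conj ((L : Type u)ˣ) :=
    { toFun := u
      map_act' := by
        intro x y
        apply Units.ext
        show (u (x ◃ y) : L) = ↑(u x * u y * (u x)⁻¹)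
        rw [Units.val_mul, Units.val_mul]
        calc (u (x ◃ y) : L) = φ (toStructSemigroup (x ◃ y)) := huval _
          _ = φ (toStructSemigroup (x ◃ y)) * ((u x : L) * ↑(u x)⁻¹) := by
              rw [Units.mul_inv, mul_one]
          _ = (φ (toStructSemigroup (x ◃ y)) * (u x : L)) * ↑(u x)⁻¹ := by
              rw [mul_assoc]
          _ = ((u x : L) * (u y : L)) * ↑(u x)⁻¹ := by
              rw [huval x, huval y, ← map_mul, ← map_mul, ← t_mul] } with hsh
  set ρ : Rack.EnvelGroup X →* (L : Type u)ˣ := Rack.toEnvelGroup.map sh with hρ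
  set ρ' : Rack.EnvelGroup X →* (L : Type u) := (Units.coeHom L).comp ρ with hρ'
  have hρ'x : ∀ x : X, ρ' (Rack.toEnvelGroup X x) = φ (toStructSemigroup x) := by
    intro x
    have h1 := Rack.toEnvelGroup.univ X ((L : Type u)ˣ) sh
    have h2 : ρ (Rack.toEnvelGroup X x) = u x := congrFun (congrArg ShelfHom.toFun h1) x
    show (ρ (Rack.toEnvelGroup X x) : L) = _
    rw [h2]
    exact huval x
  -- left inverse
  obtain ⟨θ₀, hθ₀, huniq⟩ := huniv L φ hunit
  have hid : (MonoidHom.id L).toMulHom.comp φ = φ := hom_ext (fun x => rfl)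
  have hcomp : (ρ'.comp θ).toMulHom.comp φ = φ := hom_ext (fun x => by
    show ρ' (θ (φ (toStructSemigroup x))) = _
    rw [hθ, hρ'x])
  have hLI : ρ'.comp θ = MonoidHom.id L := (huniq _ hcomp).trans (huniq _ hid).symm
  -- right inverse
  have hRI : θ.comp ρ' = MonoidHom.id (Rack.EnvelGroup X) := by
    apply (Rack.toEnvelGroup.map (R := X) (G := Rack.EnvelGroup X)).symm.injective
    apply ShelfHom.ext
    funext x
    show θ (ρ' (Rack.toEnvelGroup X x)) = Rack.toEnvelGroup X x
    rw [hρ'x, hθ]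
  exact Function.bijective_iff_has_inverse.mpr
    ⟨ρ', fun s => DFunLike.congr_fun hLI s, fun s => DFunLike.congr_fun hRI s⟩
end
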